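/- For each i in a finite index set {1,…,m}, let G_i be a group acting transitively on a set Ω_i, and let G = G_1 × ⋯ × G_m act componentwise on Ω = Ω_1 × ⋯ × Ω_m. If G_i and G_j are partition-orthogonal for all i ≠ j, then every G-invariant equivalence relation on Ω is the product of G_i-invariant equivalence relations: there exist G_i-invariant equivalence relations r_i on Ω_i such that x and y are related iff r_i (x_i) (y_i) for every i. -/

import Mathlib

/-- The componentwise action of `G × H` on `Γ × Δ`. -/
instance prodProdMulAction {G H Γ Δ : Type*} [Group G] [Group H]
    [MulAction G Γ] [MulAction H Δ] : MulAction (G × H) (Γ × Δ) where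
  smul gh x := (gh.1 • x.1, gh.2 • x.2)
  one_smul x := Prod.ext (one_smul _ _) (one_smul _ _)
  mul_smul a b x := Prod.ext (mul_smul _ _ _) (mul_smul _ _ _)

/-- A relation on `Ω` is `G`-invariant if it is preserved by the action of every
element of `G`. -/
def MulInvariant (G : Type*) {Ω : Type*} [Group G] [MulAction G Ω]
    (r : Ω → Ω → Prop) : Prop :=
  ∀ (g : G) (x y : Ω), r x y ↔ r (g • x) (g • y)

/-- Two group actions are partition-orthogonal if every invariant equivalence
relation for the componentwise product action is a product of invariant
equivalence relations on the two factors. -/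
def PartitionOrthogonal (G Γ H Δ : Type*) [Group G] [MulAction G Γ]
    [Group H] [MulAction H Δ] : Prop :=
  ∀ P : Γ × Δ → Γ × Δ → Prop, Equivalence P → MulInvariant (G × H) P →
    ∃ (r : Γ → Γ → Prop) (s : Δ → Δ → Prop),
      Equivalence r ∧ Equivalence s ∧ MulInvariant G r ∧ MulInvariant H s ∧
      ∀ p q : Γ × Δ, P p q ↔ (r p.1 q.1 ∧ s p.2 q.2)

section Aux

open Function

variable {ι : Type*} [DecidableEq ι] {Ω : ι → Type*} {G : ι → Type*}
  [∀ i, Group (G i)] [∀ i, MulAction (G i) (Ω i)]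

/-- A relation on a product depends only on the coordinates in `u`. -/
def RelDependsOn (u : Finset ι) (P : (∀ i, Ω i) → (∀ i, Ω i) → Prop) : Prop :=
  ∀ x x' y y' : ∀ i, Ω i, (∀ i ∈ u, x i = x' i) → (∀ i ∈ u, y i = y' i) →
    (P x y ↔ P x' y')

lemma smul_upd1 (k : ∀ i, G i) (j : ι) (g : G j) (w : ∀ i, Ω i) (e : Ω j) :
    (update k j g) • (update w j e) = update (k • w) j (g • e) := by
  funext i
  rcases eq_or_ne i j with rfl | h
  · simp [Pi.smul_apply']
  · simp [Pi.smul_apply', update_of_ne h]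

lemma smul_update (k : ∀ i, G i) (j : ι) (w : ∀ i, Ω i) (e : Ω j) :
    k • (update w j e) = update (k • w) j (k j • e) := by
  funext i
  rcases eq_or_ne i j with rfl | h
  · simp [Pi.smul_apply']
  · simp [Pi.smul_apply', update_of_ne h]

lemma single_smul (j : ι) (g : G j) (x : ∀ i, Ω i) :
    (update (1 : ∀ i, G i) j g) • x = update x j (g • x j) := by
  conv_lhs => rw [← update_eq_self j x]
  rw [smul_upd1, one_smul]

lemma smul_upd2 {i₀ j : ι} (hij : i₀ ≠ j) (k : ∀ i, G i) (g : G i₀) (h : G j)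
    (w : ∀ i, Ω i) (a : Ω i₀) (e : Ω j) :
    (update (update k i₀ g) j h) • (update (update w i₀ a) j e)
      = update (update (k • w) i₀ (g • a)) j (h • e) := by
  funext i
  rcases eq_or_ne i j with rfl | hj
  · simp [Pi.smul_apply']
  · rcases eq_or_ne i i₀ with rfl | hi
    · simp [Pi.smul_apply', update_of_ne hj, update_of_ne hij]
    · simp [Pi.smul_apply', update_of_ne hj, update_of_ne hi]

lemma exists_smul_eq_pi [∀ i, MulAction.IsPretransitive (G i) (Ω i)]
    (x y : ∀ i, Ω i) : ∃ k : ∀ i, G i, k • x = y := by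
  choose k hk using fun i => MulAction.exists_smul_eq (G i) (x i) (y i)
  exact ⟨k, funext fun i => hk i⟩

/-- Key splitting lemma: any invariant equivalence relation depending only on the
coordinates in `insert j s` splits off the coordinate `j`. -/
lemma key_split [∀ i, MulAction.IsPretransitive (G i) (Ω i)]
    (horth : ∀ i j, i ≠ j → PartitionOrthogonal (G i) (Ω i) (G j) (Ω j))
    (z₀ : ∀ i, Ω i) (s : Finset ι) :
    ∀ j ∉ s, ∀ P : (∀ i, Ω i) → (∀ i, Ω i) → Prop, Equivalence P →
      MulInvariant (∀ i, G i) P → RelDependsOn (insert j s) P →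
      ∃ (Q : (∀ i, Ω i) → (∀ i, Ω i) → Prop) (t : Ω j → Ω j → Prop),
        Equivalence Q ∧ MulInvariant (∀ i, G i) Q ∧ RelDependsOn s Q ∧
        Equivalence t ∧ MulInvariant (G j) t ∧
        ∀ x y, P x y ↔ Q x y ∧ t (x j) (y j) := by
  induction s using Finset.induction_on with
  | empty =>
    intro j _ P hPe hPinv hPdep
    refine ⟨fun _ _ => True, fun e e' => P (update z₀ j e) (update z₀ j e'),
      ⟨fun _ => trivial, fun _ => trivial, fun _ _ => trivial⟩,
      fun _ _ _ => Iff.rfl, fun _ _ _ _ _ _ => Iff.rfl,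
      ⟨fun e => hPe.refl _, fun h => hPe.symm h, fun h h' => hPe.trans h h'⟩,
      ?_, ?_⟩
    · intro g e e'
      have h1 := hPinv (update (1 : ∀ i, G i) j g) (update z₀ j e) (update z₀ j e')
      rw [single_smul, single_smul] at h1
      simp only [update_self, update_idem] at h1
      exact h1
    · intro x y
      show P x y ↔ True ∧ P (update z₀ j (x j)) (update z₀ j (y j))
      rw [true_and]
      refine hPdep x (update z₀ j (x j)) y (update z₀ j (y j)) ?_ ?_ <;>
      · intro i hi
        rcases Finset.mem_insert.mp hi with rfl | h
        · rw [update_self]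
        · exact absurd h (Finset.notMem_empty i)
  | @insert i₀ s₀ hi₀ ih =>
    intro j hj P hPe hPinv hPdep
    have hji₀ : j ≠ i₀ := fun h => hj (h ▸ Finset.mem_insert_self i₀ s₀)
    have hij : i₀ ≠ j := hji₀.symm
    have hjs₀ : j ∉ s₀ := fun h => hj (Finset.mem_insert_of_mem h)
    -- basepoint independence of the (i₀, j)-restriction
    have hbase : ∀ (w w' : ∀ i, Ω i) (a a' : Ω i₀) (e e' : Ω j),
        P (update (update w i₀ a) j e) (update (update w i₀ a') j e') ↔
        P (update (update w' i₀ a) j e) (update (update w' i₀ a') j e') := by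
      intro w w' a a' e e'
      obtain ⟨k, hk⟩ := exists_smul_eq_pi (G := G) w w'
      have h1 := hPinv (update (update k i₀ 1) j 1)
        (update (update w i₀ a) j e) (update (update w i₀ a') j e')
      rw [smul_upd2 hij, smul_upd2 hij] at h1
      simp only [one_smul] at h1
      rwa [hk] at h1
    -- the two-coordinate relation at basepoint z₀
    have hP2e : Equivalence (fun p q : Ω i₀ × Ω j =>
        P (update (update z₀ i₀ p.1) j p.2) (update (update z₀ i₀ q.1) j q.2)) :=
      ⟨fun _ => hPe.refl _, fun h => hPe.symm h, fun h h' => hPe.trans h h'⟩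
    have hP2inv : MulInvariant (G i₀ × G j) (fun p q : Ω i₀ × Ω j =>
        P (update (update z₀ i₀ p.1) j p.2) (update (update z₀ i₀ q.1) j q.2)) := by
      rintro ⟨g, h⟩ ⟨a, e⟩ ⟨a', e'⟩
      have h1 := hPinv (update (update (1 : ∀ i, G i) i₀ g) j h)
        (update (update z₀ i₀ a) j e) (update (update z₀ i₀ a') j e')
      rw [smul_upd2 hij, smul_upd2 hij] at h1
      simp only [one_smul] at h1
      exact h1
    obtain ⟨r2, s2, hr2e, hs2e, _, hs2inv, hsplit2⟩ := horth i₀ j hij _ hP2e hP2inv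
    -- the split of P at any basepoint
    have hP2' : ∀ (w : ∀ i, Ω i) (a a' : Ω i₀) (e e' : Ω j),
        P (update (update w i₀ a) j e) (update (update w i₀ a') j e') ↔
        r2 a a' ∧ s2 e e' := fun w a a' e e' =>
      (hbase w z₀ a a' e e').trans (hsplit2 (a, e) (a', e'))
    have hKC : ∀ (w : ∀ i, Ω i) (e e' : Ω j),
        P (update w j e) (update w j e') ↔ s2 e e' := by
      intro w e e'
      conv_lhs => rw [← update_eq_self i₀ w]
      rw [hP2' w (w i₀) (w i₀) e e']
      exact ⟨fun h => h.2, fun h => ⟨hr2e.refl _, h⟩⟩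
    -- the projection relation T, forgetting coordinate i₀
    have hTe : Equivalence (fun x y : ∀ i, Ω i =>
        ∃ a a', P (update x i₀ a) (update y i₀ a')) := by
      refine ⟨fun x => ⟨x i₀, x i₀, hPe.refl _⟩,
        fun ⟨a, a', h⟩ => ⟨a', a, hPe.symm h⟩, ?_⟩
      rintro x y z ⟨a, a', h1⟩ ⟨b, b', h2⟩
      obtain ⟨g, hg⟩ := MulAction.exists_smul_eq (G i₀) b a'
      have h3 := (hPinv (update (1 : ∀ i, G i) i₀ g) (update y i₀ b) (update z i₀ b')).mp h2
      rw [smul_upd1, smul_upd1] at h3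
      simp only [one_smul] at h3
      rw [hg] at h3
      exact ⟨a, g • b', hPe.trans h1 h3⟩
    have hTinv : MulInvariant (∀ i, G i) (fun x y : ∀ i, Ω i =>
        ∃ a a', P (update x i₀ a) (update y i₀ a')) := by
      intro k x y
      constructor
      · rintro ⟨a, a', h⟩
        refine ⟨k i₀ • a, k i₀ • a', ?_⟩
        have h1 := (hPinv k (update x i₀ a) (update y i₀ a')).mp h
        rwa [smul_update, smul_update] at h1
      · rintro ⟨a, a', h⟩
        refine ⟨k⁻¹ i₀ • a, k⁻¹ i₀ • a', ?_⟩
        have h1 := (hPinv k⁻¹ (update (k • x) i₀ a) (update (k • y) i₀ a')).mp h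
        rwa [smul_update, smul_update, inv_smul_smul, inv_smul_smul] at h1
    have hTdep : RelDependsOn (insert j s₀) (fun x y : ∀ i, Ω i =>
        ∃ a a', P (update x i₀ a) (update y i₀ a')) := by
      intro x x' y y' hx hy
      have haux : ∀ (u u' : ∀ i, Ω i), (∀ i ∈ insert j s₀, u i = u' i) →
          ∀ a : Ω i₀, ∀ i ∈ insert j (insert i₀ s₀), update u i₀ a i = update u' i₀ a i := by
        intro u u' hu a i hi
        rcases eq_or_ne i i₀ with rfl | hne
        · rw [update_self, update_self]
        · rw [update_of_ne hne, update_of_ne hne]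
          rcases Finset.mem_insert.mp hi with rfl | hi'
          · exact hu i (Finset.mem_insert_self _ _)
          · rcases Finset.mem_insert.mp hi' with rfl | hi''
            · exact absurd rfl hne
            · exact hu i (Finset.mem_insert_of_mem hi'')
      constructor
      · rintro ⟨a, a', h⟩
        exact ⟨a, a', (hPdep _ _ _ _ (haux x x' hx a) (haux y y' hy a')).mp h⟩
      · rintro ⟨a, a', h⟩
        exact ⟨a, a', (hPdep _ _ _ _ (haux x x' hx a) (haux y y' hy a')).mpr h⟩
    obtain ⟨QT, t, hQTe, _, hQTdep, hte, htinv, hTsplit⟩ := ih j hjs₀ _ hTe hTinv hTdep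
    -- identify t with s2
    have hts : ∀ e e', t e e' ↔ s2 e e' := by
      intro e e'
      have h2 : QT (update z₀ j e) (update z₀ j e') := by
        refine (hQTdep _ z₀ _ z₀ ?_ ?_).mpr (hQTe.refl z₀) <;>
        · intro i hi
          have hne : i ≠ j := fun h => hjs₀ (h ▸ hi)
          exact update_of_ne hne _ _
      have h1 : (∃ a a', P (update (update z₀ j e) i₀ a) (update (update z₀ j e') i₀ a'))
          ↔ t e e' := by
        refine (hTsplit (update z₀ j e) (update z₀ j e')).trans ?_
        rw [update_self, update_self]
        exact and_iff_right h2
      rw [← h1]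
      constructor
      · rintro ⟨a, a', h⟩
        rw [update_comm hji₀, update_comm hji₀, hP2' z₀ a a' e e'] at h
        exact h.2
      · intro h
        refine ⟨z₀ i₀, z₀ i₀, ?_⟩
        rw [update_comm hji₀, update_comm hji₀, hP2' z₀ _ _ e e']
        exact ⟨hr2e.refl _, h⟩
    -- the complementary relation Q
    have hQe' : ∀ (x y : ∀ i, Ω i) (e : Ω j),
        P (update x j e) (update y j e) ↔ P (update x j (z₀ j)) (update y j (z₀ j)) := by
      intro x y e
      obtain ⟨g, hg⟩ := MulAction.exists_smul_eq (G j) e (z₀ j)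
      have h1 := hPinv (update (1 : ∀ i, G i) j g) (update x j e) (update y j e)
      rw [smul_upd1, smul_upd1] at h1
      simp only [one_smul] at h1
      rw [hg] at h1
      exact h1
    have hQe : Equivalence (fun x y : ∀ i, Ω i =>
        P (update x j (z₀ j)) (update y j (z₀ j))) :=
      ⟨fun _ => hPe.refl _, fun h => hPe.symm h, fun h h' => hPe.trans h h'⟩
    have hQinv : MulInvariant (∀ i, G i) (fun x y : ∀ i, Ω i =>
        P (update x j (z₀ j)) (update y j (z₀ j))) := by
      intro k x y
      have h1 := hPinv k (update x j (z₀ j)) (update y j (z₀ j))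
      rw [smul_update, smul_update] at h1
      exact h1.trans (hQe' (k • x) (k • y) (k j • z₀ j))
    have hQdep : RelDependsOn (insert i₀ s₀) (fun x y : ∀ i, Ω i =>
        P (update x j (z₀ j)) (update y j (z₀ j))) := by
      intro x x' y y' hx hy
      have haux : ∀ (u u' : ∀ i, Ω i), (∀ i ∈ insert i₀ s₀, u i = u' i) →
          ∀ i ∈ insert j (insert i₀ s₀), update u j (z₀ j) i = update u' j (z₀ j) i := by
        intro u u' hu i hi
        rcases eq_or_ne i j with rfl | hne
        · rw [update_self, update_self]
        · rw [update_of_ne hne, update_of_ne hne]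
          rcases Finset.mem_insert.mp hi with rfl | hi'
          · exact absurd rfl hne
          · exact hu i hi'
      exact hPdep _ _ _ _ (haux x x' hx) (haux y y' hy)
    refine ⟨_, t, hQe, hQinv, hQdep, hte, htinv, ?_⟩
    intro x y
    constructor
    · intro h
      have hT : ∃ a a', P (update x i₀ a) (update y i₀ a') :=
        ⟨x i₀, y i₀, by rwa [update_eq_self, update_eq_self]⟩
      have ht : t (x j) (y j) := ((hTsplit x y).mp hT).2
      refine ⟨?_, ht⟩
      have hs2 : s2 (x j) (y j) := (hts _ _).mp ht
      have h2 : P (update y j (x j)) y := by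
        conv_rhs => rw [← update_eq_self j y]
        exact (hKC y (x j) (y j)).mpr hs2
      have h3 : P x (update y j (x j)) := hPe.trans h (hPe.symm h2)
      have h4 := (hQe' x y (x j)).mp (by rwa [update_eq_self])
      exact h4
    · rintro ⟨hQ, ht⟩
      have hs2 : s2 (x j) (y j) := (hts _ _).mp ht
      have h2 : P (update y j (x j)) y := by
        conv_rhs => rw [← update_eq_self j y]
        exact (hKC y (x j) (y j)).mpr hs2
      have h3 : P x (update y j (x j)) := by
        have h5 := (hQe' x y (x j)).mpr hQ
        rwa [update_eq_self] at h5
      exact hPe.trans h3 h2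

end Aux

/-- If the transitive groups `G i` are pairwise partition-orthogonal,
then every invariant equivalence relation of the product group acting
componentwise on the product set is a product of invariant equivalence relations
on the factors. -/
theorem invariant_relations_of_pairwise_orthogonal {ι : Type*} [Fintype ι]
    {Ω : ι → Type*} {G : ι → Type*} [∀ i, Group (G i)] [∀ i, MulAction (G i) (Ω i)]
    [∀ i, MulAction.IsPretransitive (G i) (Ω i)]
    (horth : ∀ i j, i ≠ j → PartitionOrthogonal (G i) (Ω i) (G j) (Ω j))
    (R : (∀ i, Ω i) → (∀ i, Ω i) → Prop) (hR : Equivalence R)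
    (hinv : MulInvariant (∀ i, G i) R) :
    ∃ r : ∀ i, Ω i → Ω i → Prop,
      (∀ i, Equivalence (r i) ∧ MulInvariant (G i) (r i)) ∧
      ∀ x y : ∀ i, Ω i, R x y ↔ ∀ i, r i (x i) (y i) := by
  classical
  by_cases hne : Nonempty (∀ i, Ω i)
  · obtain ⟨z₀⟩ := hne
    have hdep : ∀ j : ι, RelDependsOn (insert j (Finset.univ.erase j)) R := by
      intro j x x' y y' hx hy
      have hx' : x = x' := funext fun i => by
        rcases eq_or_ne i j with rfl | h
        · exact hx i (Finset.mem_insert_self _ _)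
        · exact hx i (Finset.mem_insert_of_mem (Finset.mem_erase.mpr ⟨h, Finset.mem_univ i⟩))
      have hy' : y = y' := funext fun i => by
        rcases eq_or_ne i j with rfl | h
        · exact hy i (Finset.mem_insert_self _ _)
        · exact hy i (Finset.mem_insert_of_mem (Finset.mem_erase.mpr ⟨h, Finset.mem_univ i⟩))
      rw [hx', hy']
    have hkey : ∀ j : ι, ∃ (Q : (∀ i, Ω i) → (∀ i, Ω i) → Prop) (t : Ω j → Ω j → Prop),
        Equivalence Q ∧ MulInvariant (∀ i, G i) Q ∧
        RelDependsOn (Finset.univ.erase j) Q ∧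
        Equivalence t ∧ MulInvariant (G j) t ∧
        ∀ x y, R x y ↔ Q x y ∧ t (x j) (y j) := fun j =>
      key_split horth z₀ (Finset.univ.erase j) j (Finset.notMem_erase j _)
        R hR hinv (hdep j)
    choose Q t hQe hQinv hQdep hte htinv hsplit using hkey
    have hstep : ∀ (x : ∀ i, Ω i) (j : ι) (b : Ω j),
        R x (Function.update x j b) ↔ t j (x j) b := by
      intro x j b
      have h1 := hsplit j x (Function.update x j b)
      have h2 : Q j x (Function.update x j b) := by
        refine (hQdep j x x (Function.update x j b) x ?_ ?_).mpr ((hQe j).refl x)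
        · intro i _; rfl
        · intro i hi
          exact Function.update_of_ne (Finset.mem_erase.mp hi).1 _ _
      rw [Function.update_self] at h1
      exact h1.trans (and_iff_right h2)
    refine ⟨t, fun i => ⟨hte i, htinv i⟩, ?_⟩
    intro x y
    constructor
    · intro h i
      exact ((hsplit i x y).mp h).2
    · intro h
      have hfold : ∀ l : List ι,
          (∀ i, (l.foldr (fun j w => Function.update w j (y j)) x) i = x i ∨
                (l.foldr (fun j w => Function.update w j (y j)) x) i = y i) ∧
          R x (l.foldr (fun j w => Function.update w j (y j)) x) := by
        intro l
        induction l with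
        | nil => exact ⟨fun i => Or.inl rfl, hR.refl x⟩
        | cons j l ihl =>
          obtain ⟨hvals, hRl⟩ := ihl
          set w := l.foldr (fun j w => Function.update w j (y j)) x with hw
          constructor
          · intro i
            rcases eq_or_ne i j with rfl | hne
            · right; rw [List.foldr_cons, ← hw, Function.update_self]
            · rw [List.foldr_cons, ← hw, Function.update_of_ne hne]
              exact hvals i
          · refine hR.trans hRl ?_
            rw [List.foldr_cons, ← hw]
            rw [hstep w j (y j)]
            rcases hvals j with hv | hv
            · rw [hv]; exact h j
            · rw [hv]; exact (hte j).refl _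
      obtain ⟨hvals, hRl⟩ := hfold Finset.univ.toList
      have hmem : ∀ (l : List ι) (i : ι), i ∈ l →
          (l.foldr (fun j w => Function.update w j (y j)) x) i = y i := by
        intro l
        induction l with
        | nil => intro i hi; exact absurd hi List.not_mem_nil
        | cons j l ihl =>
          intro i hi
          rcases eq_or_ne i j with rfl | hne
          · rw [List.foldr_cons, Function.update_self]
          · rw [List.foldr_cons, Function.update_of_ne hne]
            exact ihl i (by
              rcases List.mem_cons.mp hi with h' | h'
              · exact absurd h' hne
              · exact h')
      have hfin : Finset.univ.toList.foldr (fun j w => Function.update w j (y j)) x = y :=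
        funext fun i => hmem _ i (Finset.mem_toList.mpr (Finset.mem_univ i))
      rwa [hfin] at hRl
  · refine ⟨fun i _ _ => True, fun i =>
      ⟨⟨fun _ => trivial, fun _ => trivial, fun _ _ => trivial⟩, fun _ _ _ => Iff.rfl⟩, ?_⟩
    intro x
    exact absurd ⟨x⟩ hne
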